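/- There exist absolute constants c, C > 0 such that the following holds. Let θ ∈ [1/4, 4] and let m, n be positive integers with θm ≥ 400 and m ≤ n/3, and define g(z) = f_{θ,m}(z)·f_{θ,n−m}(θn − z) / f_{θ,n}(θn) for 0 < z < θn (g is the conditional density at z of Z' = Z_1 + ⋯ + Z_m given Z_1 + ⋯ + Z_n = θn, for i.i.d. exponential variables Z_i with mean θ). Then for every z with 1 ≤ |z − θm| ≤ 10·√(θm) one has c/√(θm) ≤ g(z) ≤ C/√(θm). -/

import Mathlib

open MeasureTheory ProbabilityTheory

namespace Paper

/-- The Gamma density with shape `k` and scale `θ`: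
`f_{θ,k}(z) = z^{k-1} e^{-z/θ} / (θ^k (k-1)!)`. -/
noncomputable def gammaDensity (θ : ℝ) (k : ℕ) (z : ℝ) : ℝ :=
  z ^ (k - 1) * Real.exp (-z / θ) / (θ ^ k * (Nat.factorial (k - 1)))

/-! ### Auxiliary lemmas -/

lemma sqrtpi_ge : (1:ℝ) ≤ Real.sqrt Real.pi := by
  rw [show (1:ℝ) = Real.sqrt 1 by simp]
  exact Real.sqrt_le_sqrt (by linarith [Real.pi_gt_three])

lemma stirlingSeq_ge (n : ℕ) (hn : 1 ≤ n) : (1:ℝ) ≤ Stirling.stirlingSeq n := by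
  obtain ⟨k, rfl⟩ := Nat.exists_eq_add_of_le hn
  calc (1:ℝ) ≤ Real.sqrt Real.pi := sqrtpi_ge
  _ ≤ Stirling.stirlingSeq (1 + k) := by
      have := (Stirling.stirlingSeq'_antitone).le_of_tendsto
        (by have := Stirling.tendsto_stirlingSeq_sqrt_pi
            exact this.comp (Filter.tendsto_add_atTop_nat 1)) k
      simpa [Function.comp, Nat.succ_eq_add_one, Nat.add_comm] using this

lemma stirlingSeq_le (n : ℕ) (hn : 1 ≤ n) : Stirling.stirlingSeq n ≤ Real.exp 1 / Real.sqrt 2 := by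
  obtain ⟨k, rfl⟩ := Nat.exists_eq_add_of_le hn
  have := Stirling.stirlingSeq'_antitone (Nat.zero_le k)
  simpa [Function.comp, Stirling.stirlingSeq_one, Nat.add_comm] using this

lemma stirling_lower (n : ℕ) (hn : 1 ≤ n) :
    Real.sqrt n * ((n : ℝ) / Real.exp 1) ^ n ≤ n.factorial := by
  have h2 := stirlingSeq_ge n hn
  have h3 : (n.factorial : ℝ) = Stirling.stirlingSeq n * (Real.sqrt (2*n) * ((n:ℝ)/Real.exp 1)^n) := by
    rw [Stirling.stirlingSeq]; field_simp
  rw [h3]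
  have h4 : Real.sqrt n ≤ Real.sqrt (2*n) := Real.sqrt_le_sqrt (by
    have : (0:ℝ) ≤ (n:ℝ) := Nat.cast_nonneg n
    linarith)
  have hp : (0:ℝ) ≤ ((n:ℝ)/Real.exp 1)^n := by positivity
  calc Real.sqrt n * ((n : ℝ) / Real.exp 1) ^ n
      ≤ Real.sqrt (2*n) * ((n:ℝ)/Real.exp 1)^n := by gcongr
    _ ≤ Stirling.stirlingSeq n * (Real.sqrt (2*n) * ((n:ℝ)/Real.exp 1)^n) :=
        le_mul_of_one_le_left (by positivity) h2

lemma stirling_upper (n : ℕ) (hn : 1 ≤ n) :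
    (n.factorial : ℝ) ≤ 3 * Real.sqrt n * ((n : ℝ) / Real.exp 1) ^ n := by
  have h2 := stirlingSeq_le n hn
  have h3 : (n.factorial : ℝ) = Stirling.stirlingSeq n * (Real.sqrt (2*n) * ((n:ℝ)/Real.exp 1)^n) := by
    rw [Stirling.stirlingSeq]; field_simp
  rw [h3]
  have h4 : Real.sqrt (2*n) = Real.sqrt 2 * Real.sqrt n := by
    rw [← Real.sqrt_mul (by norm_num)]
  have h5 : Real.exp 1 / Real.sqrt 2 * Real.sqrt 2 = Real.exp 1 := by
    field_simp
  have h6 : Real.exp 1 ≤ 3 := by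
    have := Real.exp_one_lt_d9; linarith
  have hp : (0:ℝ) ≤ ((n:ℝ)/Real.exp 1)^n := by positivity
  have hs : (0:ℝ) ≤ Real.sqrt n := Real.sqrt_nonneg _
  have hs2 : (0:ℝ) ≤ Real.sqrt 2 := Real.sqrt_nonneg _
  calc Stirling.stirlingSeq n * (Real.sqrt (2*n) * ((n:ℝ)/Real.exp 1)^n)
      ≤ (Real.exp 1 / Real.sqrt 2) * (Real.sqrt (2*n) * ((n:ℝ)/Real.exp 1)^n) := by
        apply mul_le_mul_of_nonneg_right h2; positivity
    _ = Real.exp 1 * Real.sqrt n * ((n:ℝ)/Real.exp 1)^n := by rw [h4]; field_simp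
    _ ≤ 3 * Real.sqrt n * ((n:ℝ)/Real.exp 1)^n := by gcongr

lemma choose_bounds (m k : ℕ) (hm : 1 ≤ m) (hk : 1 ≤ k) :
    Real.sqrt ((m:ℝ)+k) * ((m:ℝ)+k)^(m+k) / (9 * Real.sqrt m * Real.sqrt k * (m:ℝ)^m * (k:ℝ)^k)
      ≤ ((m+k).choose m : ℝ) ∧
    ((m+k).choose m : ℝ) ≤
      3 * Real.sqrt ((m:ℝ)+k) * ((m:ℝ)+k)^(m+k) / (Real.sqrt m * Real.sqrt k * (m:ℝ)^m * (k:ℝ)^k) := by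
  have hmn : m ≤ m + k := Nat.le_add_right m k
  have hcast : ((m+k).choose m : ℝ) = ((m+k).factorial : ℝ) / ((m.factorial : ℝ) * ((k.factorial : ℝ))) := by
    rw [Nat.cast_choose ℝ hmn, Nat.add_sub_cancel_left]
  have hm0 : (0:ℝ) < m := by exact_mod_cast hm
  have hk0 : (0:ℝ) < k := by exact_mod_cast hk
  have hn0 : (0:ℝ) < (m:ℝ) + k := by positivity
  have hfm := stirling_lower m hm
  have hfm' := stirling_upper m hm
  have hfk := stirling_lower k hk
  have hfk' := stirling_upper k hk
  have hfn := stirling_lower (m+k) (le_trans hm hmn)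
  have hfn' := stirling_upper (m+k) (le_trans hm hmn)
  push_cast at hfn hfn'
  have hsm : (0:ℝ) < Real.sqrt m := Real.sqrt_pos.mpr hm0
  have hsk : (0:ℝ) < Real.sqrt k := Real.sqrt_pos.mpr hk0
  have hsn : (0:ℝ) < Real.sqrt ((m:ℝ)+k) := Real.sqrt_pos.mpr hn0
  have he : (0:ℝ) < Real.exp 1 := Real.exp_pos 1
  have hfm0 : (0:ℝ) < (m.factorial : ℝ) := by exact_mod_cast m.factorial_pos
  have hfk0 : (0:ℝ) < (k.factorial : ℝ) := by exact_mod_cast k.factorial_pos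
  have hpm : (0:ℝ) < ((m:ℝ)/Real.exp 1)^m := pow_pos (div_pos hm0 he) m
  have hpk : (0:ℝ) < ((k:ℝ)/Real.exp 1)^k := pow_pos (div_pos hk0 he) k
  have hpn : (0:ℝ) < (((m:ℝ)+k)/Real.exp 1)^(m+k) := pow_pos (div_pos hn0 he) (m+k)
  constructor
  · rw [hcast]
    have h1 : Real.sqrt ((m:ℝ)+k) * ((m:ℝ)+k)^(m+k) / (9 * Real.sqrt m * Real.sqrt k * (m:ℝ)^m * (k:ℝ)^k)
        = (Real.sqrt ((m:ℝ)+k) * (((m:ℝ)+k) / Real.exp 1) ^ (m+k)) /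
          ((3 * Real.sqrt m * ((m:ℝ)/Real.exp 1)^m) * (3 * Real.sqrt k * ((k:ℝ)/Real.exp 1)^k)) := by
      rw [div_pow, div_pow, div_pow]
      field_simp
      rw [pow_add]
      ring
    rw [h1]
    apply div_le_div₀ (by positivity) hfn (by positivity)
    apply mul_le_mul hfm' hfk' (le_of_lt (by positivity)) (le_of_lt (by positivity))
  · rw [hcast]
    have h1 : 3 * Real.sqrt ((m:ℝ)+k) * ((m:ℝ)+k)^(m+k) / (Real.sqrt m * Real.sqrt k * (m:ℝ)^m * (k:ℝ)^k)
        = (3 * Real.sqrt ((m:ℝ)+k) * (((m:ℝ)+k) / Real.exp 1) ^ (m+k)) /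
          ((Real.sqrt m * ((m:ℝ)/Real.exp 1)^m) * (Real.sqrt k * ((k:ℝ)/Real.exp 1)^k)) := by
      rw [div_pow, div_pow, div_pow]
      field_simp
      rw [pow_add]
    rw [h1]
    apply div_le_div₀ (le_of_lt (by positivity)) hfn' (by positivity)
    apply mul_le_mul hfm hfk (le_of_lt (by positivity)) (le_of_lt (by positivity))

set_option maxHeartbeats 1000000 in
lemma B_bounds (θ : ℝ) (hθ1 : 1/4 ≤ θ) (hθ4 : θ ≤ 4) (m k : ℕ) (hm : 1 ≤ m) (hk : 2*m ≤ k) :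
    1/18 / Real.sqrt (θ*m) ≤ ((m+k).choose m : ℝ) * (m:ℝ)^m * (k:ℝ)^k / (θ * ((m:ℝ)+k)^(m+k)) ∧
    ((m+k).choose m : ℝ) * (m:ℝ)^m * (k:ℝ)^k / (θ * ((m:ℝ)+k)^(m+k)) ≤ 8 / Real.sqrt (θ*m) := by
  have hθ0 : (0:ℝ) < θ := by linarith
  have hm0 : (0:ℝ) < m := by exact_mod_cast hm
  have hk1 : 1 ≤ k := le_trans (by omega) hk
  have hk0 : (0:ℝ) < k := by exact_mod_cast hk1
  have hkm : 2*(m:ℝ) ≤ k := by exact_mod_cast hk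
  have hn0 : (0:ℝ) < (m:ℝ) + k := by positivity
  have hsm : (0:ℝ) < Real.sqrt m := Real.sqrt_pos.mpr hm0
  have hsk : (0:ℝ) < Real.sqrt k := Real.sqrt_pos.mpr hk0
  have hsn : (0:ℝ) < Real.sqrt ((m:ℝ)+k) := Real.sqrt_pos.mpr hn0
  have hsθ : (0:ℝ) < Real.sqrt θ := Real.sqrt_pos.mpr hθ0
  have hpm : (0:ℝ) < (m:ℝ)^m := pow_pos hm0 m
  have hpk : (0:ℝ) < (k:ℝ)^k := pow_pos hk0 k
  have hpn : (0:ℝ) < ((m:ℝ)+k)^(m+k) := pow_pos hn0 (m+k)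
  have hstm : Real.sqrt (θ*m) = Real.sqrt θ * Real.sqrt m := Real.sqrt_mul (le_of_lt hθ0) m
  have hsθsq : Real.sqrt θ * Real.sqrt θ = θ := Real.mul_self_sqrt (le_of_lt hθ0)
  have hsθ2 : Real.sqrt θ ≤ 2 := by nlinarith [hsθsq]
  have hsθhalf : (1:ℝ)/2 ≤ Real.sqrt θ := by nlinarith [hsθsq, hsθ]
  have hskn : Real.sqrt k ≤ Real.sqrt ((m:ℝ)+k) := Real.sqrt_le_sqrt (by linarith)
  obtain ⟨hcl, hcu⟩ := choose_bounds m k hm hk1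
  constructor
  · have hB : Real.sqrt ((m:ℝ)+k) / (9 * θ * Real.sqrt m * Real.sqrt k)
        ≤ ((m+k).choose m : ℝ) * (m:ℝ)^m * (k:ℝ)^k / (θ * ((m:ℝ)+k)^(m+k)) := by
      have h1 : Real.sqrt ((m:ℝ)+k) / (9 * θ * Real.sqrt m * Real.sqrt k)
          = (Real.sqrt ((m:ℝ)+k) * ((m:ℝ)+k)^(m+k) / (9 * Real.sqrt m * Real.sqrt k * (m:ℝ)^m * (k:ℝ)^k))
            * (m:ℝ)^m * (k:ℝ)^k / (θ * ((m:ℝ)+k)^(m+k)) := by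
        field_simp
      rw [h1]
      gcongr
    refine le_trans ?_ hB
    rw [hstm, div_le_div_iff₀ (by positivity) (by positivity)]
    have hθ2' : θ/2 ≤ Real.sqrt θ := by nlinarith [hsθsq, hsθ2, hsθ]
    calc 1/18 * (9*θ*Real.sqrt m*Real.sqrt k) = (θ/2)*(Real.sqrt m*Real.sqrt k) := by ring
      _ ≤ Real.sqrt θ*(Real.sqrt m*Real.sqrt k) :=
          mul_le_mul_of_nonneg_right hθ2' (le_of_lt (mul_pos hsm hsk))
      _ ≤ Real.sqrt θ*(Real.sqrt m*Real.sqrt ((m:ℝ)+k)) := by gcongr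
      _ = Real.sqrt ((m:ℝ)+k)*(Real.sqrt θ*Real.sqrt m) := by ring
  · have hB : ((m+k).choose m : ℝ) * (m:ℝ)^m * (k:ℝ)^k / (θ * ((m:ℝ)+k)^(m+k))
        ≤ 3 * Real.sqrt ((m:ℝ)+k) / (θ * Real.sqrt m * Real.sqrt k) := by
      have h1 : 3 * Real.sqrt ((m:ℝ)+k) / (θ * Real.sqrt m * Real.sqrt k)
          = (3 * Real.sqrt ((m:ℝ)+k) * ((m:ℝ)+k)^(m+k) / (Real.sqrt m * Real.sqrt k * (m:ℝ)^m * (k:ℝ)^k))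
            * (m:ℝ)^m * (k:ℝ)^k / (θ * ((m:ℝ)+k)^(m+k)) := by
        field_simp
      rw [h1]
      gcongr
    refine le_trans hB ?_
    rw [hstm, div_le_div_iff₀ (by positivity) (by positivity)]
    have h9 : 3 * Real.sqrt ((m:ℝ)+k) ≤ 4 * Real.sqrt k := by
      have h0 : Real.sqrt ((m:ℝ)+k) ≤ Real.sqrt ((3:ℝ)/2 * k) := Real.sqrt_le_sqrt (by linarith)
      have h2 : Real.sqrt ((3:ℝ)/2 * k) = Real.sqrt (3/2) * Real.sqrt k := Real.sqrt_mul (by norm_num) _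
      have h3 : Real.sqrt ((3:ℝ)/2) ≤ 4/3 := by
        rw [show (4:ℝ)/3 = Real.sqrt ((4/3)^2) by rw [Real.sqrt_sq]; norm_num]
        apply Real.sqrt_le_sqrt; norm_num
      nlinarith [Real.sqrt_nonneg ((3:ℝ)/2)]
    have hθ2' : 4*Real.sqrt θ ≤ 8*θ := by nlinarith [hsθsq, hsθhalf]
    calc 3*Real.sqrt ((m:ℝ)+k)*(Real.sqrt θ*Real.sqrt m)
        = (3*Real.sqrt ((m:ℝ)+k))*(Real.sqrt θ*Real.sqrt m) := by ring
      _ ≤ (4*Real.sqrt k)*(Real.sqrt θ*Real.sqrt m) :=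
          mul_le_mul_of_nonneg_right h9 (le_of_lt (mul_pos hsθ hsm))
      _ = (4*Real.sqrt θ)*(Real.sqrt m*Real.sqrt k) := by ring
      _ ≤ (8*θ)*(Real.sqrt m*Real.sqrt k) :=
          mul_le_mul_of_nonneg_right hθ2' (le_of_lt (mul_pos hsm hsk))
      _ = 8*(θ*Real.sqrt m*Real.sqrt k) := by ring

lemma density_ratio_eq (θ : ℝ) (hθ : 0 < θ) (m n : ℕ) (hm : 1 ≤ m) (hmn : m < n)
    (z : ℝ) :
    gammaDensity θ m z * gammaDensity θ (n - m) (θ * n - z) / gammaDensity θ n (θ * n)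
      = ((n.choose m : ℝ) * (m:ℝ) ^ m * ((n - m : ℕ):ℝ) ^ (n - m) / (θ * (n:ℝ) ^ n))
        * ((z / (θ * m)) ^ (m - 1) * ((θ * n - z) / (θ * ((n - m : ℕ):ℝ))) ^ (n - m - 1)) := by
  obtain ⟨a, rfl⟩ : ∃ a, m = a + 1 := ⟨m - 1, by omega⟩
  obtain ⟨b, rfl⟩ : ∃ b, n = (a+1) + (b + 1) := ⟨n - (a+1) - 1, by omega⟩
  have hsub : (a+1) + (b+1) - (a+1) = b+1 := by omega
  rw [hsub]
  have hchoose : ((((a+1)+(b+1)).choose (a+1)) : ℝ)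
      = (((a+1)+(b+1)).factorial : ℝ) / (((a+1).factorial : ℝ) * ((b+1).factorial : ℝ)) := by
    rw [Nat.cast_choose ℝ (Nat.le_add_right _ _), Nat.add_sub_cancel_left]
  unfold gammaDensity
  have h1 : (a+1) - 1 = a := by omega
  have h2 : (b+1) - 1 = b := by omega
  have h3 : ((a+1)+(b+1)) - 1 = a+b+1 := by omega
  rw [h1, h2, h3, hchoose]
  have hθ0 : θ ≠ 0 := ne_of_gt hθ
  have hN : (((a+1)+(b+1):ℕ):ℝ) = (a:ℝ) + b + 2 := by push_cast; ring
  rw [hN]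
  have hexp2 : Real.exp (-(θ * ((a:ℝ)+b+2) - z) / θ)
      = Real.exp (-(θ * ((a:ℝ)+b+2)) / θ) / Real.exp (-z / θ) := by
    rw [← Real.exp_sub]
    congr 1
    field_simp
    ring
  rw [hexp2]
  have hfacts : (((a+1)+(b+1)).factorial : ℝ) = ((a:ℝ)+b+2) * ((a+b+1).factorial : ℝ) := by
    have h4 : (a+1)+(b+1) = (a+b+1)+1 := by omega
    rw [h4, Nat.factorial_succ]
    push_cast
    ring
  have hfa1 : ((a+1).factorial : ℝ) = ((a:ℝ)+1) * (a.factorial : ℝ) := by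
    rw [Nat.factorial_succ]; push_cast; ring
  have hfb1 : ((b+1).factorial : ℝ) = ((b:ℝ)+1) * (b.factorial : ℝ) := by
    rw [Nat.factorial_succ]; push_cast; ring
  rw [hfacts, hfa1, hfb1]
  have hfa : ((a.factorial : ℝ)) ≠ 0 := by exact_mod_cast a.factorial_ne_zero
  have hfb : ((b.factorial : ℝ)) ≠ 0 := by exact_mod_cast b.factorial_ne_zero
  have hfab : (((a+b+1).factorial : ℝ)) ≠ 0 := by exact_mod_cast (a+b+1).factorial_ne_zero
  have hN0 : ((a:ℝ) + b + 2) ≠ 0 := by positivity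
  have hE1 : Real.exp (-z/θ) ≠ 0 := Real.exp_ne_zero _
  have hE2 : Real.exp (-(θ * ((a:ℝ)+b+2))/θ) ≠ 0 := Real.exp_ne_zero _
  push_cast
  have hsp1 : (z / (θ * ((a:ℝ)+1))) ^ a = z^a / (θ^a * ((a:ℝ)+1)^a) := by
    rw [div_pow, mul_pow]
  have hsp2 : ((θ * ((a:ℝ)+↑b+2) - z) / (θ * ((b:ℝ)+1))) ^ b
      = (θ * ((a:ℝ)+↑b+2) - z)^b / (θ^b * ((b:ℝ)+1)^b) := by
    rw [div_pow, mul_pow]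
  have hsp3 : (θ * ((a:ℝ)+↑b+2)) ^ (a+b+1) = θ^(a+b+1) * ((a:ℝ)+↑b+2)^(a+b+1) := mul_pow _ _ _
  rw [hsp1, hsp2, hsp3]
  set E1 := Real.exp (-z/θ) with hE1d
  set E2 := Real.exp (-(θ * ((a:ℝ)+↑b+2))/θ) with hE2d
  set W := θ * ((a:ℝ)+↑b+2) - z with hWd
  set N := (a:ℝ)+↑b+2 with hNd
  have hNne : N ≠ 0 := hN0
  have hA1 : ((a:ℝ)+1) ≠ 0 := by positivity
  have hB1 : ((b:ℝ)+1) ≠ 0 := by positivity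
  field_simp
  ring

lemma log_one_add_approx {x : ℝ} (h : |x| ≤ 1/2) : |Real.log (1+x) - x| ≤ 2*x^2 := by
  have h1 : |(-x)| < 1 := by rw [abs_neg]; linarith [abs_nonneg x]
  have h0 := Real.abs_log_sub_add_sum_range_le h1 1
  simp [Finset.sum_range_one] at h0
  have h3 : x^2 / (1 - |x|) ≤ 2*x^2 := by
    rw [div_le_iff₀ (by linarith [abs_nonneg x])]
    nlinarith [sq_nonneg x, abs_nonneg x]
  rw [show Real.log (1+x) - x = -x + Real.log (1+x) by ring]
  linarith




lemma quad_bound (θ M t c : ℝ) (hθ1 : 1/4 ≤ θ) (hM : 1 ≤ M) (hc : 0 ≤ c)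
    (ht : t^2 ≤ c*(θ*M)) : (M-1)*(2*(t/(θ*M))^2) ≤ 8*c := by
  have hθ0 : (0:ℝ) < θ := by linarith
  have hM0 : (0:ℝ) < M := by linarith
  have he : (M-1)*(2*(t/(θ*M))^2) = ((M-1)*2*t^2)/((θ*M)^2) := by rw [div_pow]; ring
  rw [he, div_le_iff₀ (by positivity)]
  have h1 : (M-1)*2*t^2 ≤ 2*M*(c*(θ*M)) := by nlinarith [sq_nonneg t, ht]
  have h2 : 2*M*(c*(θ*M)) ≤ 8*c*(θ*M)^2 := by
    nlinarith [mul_nonneg (mul_nonneg (mul_nonneg hc hθ0.le) (sq_nonneg M)) (show (0:ℝ) ≤ 4*θ-1 by linarith)]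
  linarith

set_option maxHeartbeats 1000000 in
lemma Q_bounds (θ : ℝ) (hθ1 : 1/4 ≤ θ) (hθ4 : θ ≤ 4) (m n : ℕ) (hm : 0 < m)
    (hθm : 400 ≤ θ*m) (hmn3 : (m:ℝ) ≤ (n:ℝ)/3) (z : ℝ) (hz : 0 < z) (hzn : z < θ*n)
    (ht10 : |z - θ*m| ≤ 10*Real.sqrt (θ*m)) :
    Real.exp (-1300) ≤ (z/(θ*(m:ℝ)))^(m-1) * ((θ*(n:ℝ) - z)/(θ*((n-m:ℕ):ℝ)))^(n-m-1) ∧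
    (z/(θ*(m:ℝ)))^(m-1) * ((θ*(n:ℝ) - z)/(θ*((n-m:ℕ):ℝ)))^(n-m-1) ≤ Real.exp 1300 := by
  have hθ0 : (0:ℝ) < θ := by linarith
  have hm1 : 1 ≤ m := hm
  have hmR : (0:ℝ) < m := by exact_mod_cast hm
  have hm100 : (100:ℝ) ≤ m := by nlinarith
  have h3m : 3*(m:ℝ) ≤ n := by linarith
  have hmnN : m < n := by exact_mod_cast (show (m:ℝ) < n by linarith)
  have hK : ((n-m:ℕ):ℝ) = (n:ℝ) - m := by
    exact_mod_cast Nat.cast_sub hmnN.le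
  have hKpos : (0:ℝ) < ((n-m:ℕ):ℝ) := by rw [hK]; linarith
  have hθmpos : (0:ℝ) < θ*m := by positivity
  have hsqtm : (20:ℝ) ≤ Real.sqrt (θ*m) := by
    have h := Real.sqrt_le_sqrt hθm
    rwa [show (400:ℝ) = 20^2 by norm_num, Real.sqrt_sq (by norm_num : (0:ℝ) ≤ 20)] at h
  have hsq : Real.sqrt (θ*m) * Real.sqrt (θ*m) = θ*m := Real.mul_self_sqrt (le_of_lt hθmpos)
  have hsqpos : (0:ℝ) < Real.sqrt (θ*m) := by linarith
  set t := z - θ*m with htdef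
  have habs : |t| ≤ 10 * Real.sqrt (θ*m) := ht10
  have ht2 : t^2 ≤ 100*(θ*m) := by
    have h := mul_le_mul habs habs (abs_nonneg t) (by positivity)
    rw [abs_mul_abs_self] at h
    nlinarith [hsq]
  have hθK2 : 2*(θ*m) ≤ θ*((n-m:ℕ):ℝ) := by rw [hK]; nlinarith
  have hθKpos : (0:ℝ) < θ*((n-m:ℕ):ℝ) := by positivity
  have hs12 : |t/(θ*m)| ≤ 1/2 := by
    rw [abs_div, abs_of_pos hθmpos, div_le_iff₀ hθmpos]
    nlinarith [hsq, hsqtm, habs]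
  have hx12 : |(-t)/(θ*((n-m:ℕ):ℝ))| ≤ 1/2 := by
    rw [abs_div, abs_neg, abs_of_pos hθKpos, div_le_iff₀ hθKpos]
    nlinarith [hsq, hsqtm, habs, hθK2]
  have h1s : z/(θ*(m:ℝ)) = 1 + t/(θ*m) := by
    rw [htdef]; field_simp; ring
  have h2s : (θ*(n:ℝ) - z)/(θ*((n-m:ℕ):ℝ)) = 1 + (-t)/(θ*((n-m:ℕ):ℝ)) := by
    have hnm : (n:ℝ) - m ≠ 0 := by rw [← hK]; exact ne_of_gt hKpos
    rw [htdef, hK]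
    field_simp
    ring
  rw [h1s, h2s]
  have hspos : (0:ℝ) < 1 + t/(θ*m) := by
    rw [← h1s]; positivity
  have hxpos : (0:ℝ) < 1 + (-t)/(θ*((n-m:ℕ):ℝ)) := by
    rw [← h2s]
    apply div_pos (by linarith) hθKpos
  have hla := log_one_add_approx hs12
  have hlb := log_one_add_approx hx12
  have hcastA : ((m-1:ℕ):ℝ) = (m:ℝ) - 1 := by
    rw [Nat.cast_sub hm1]; norm_num
  have hcastB : ((n-m-1:ℕ):ℝ) = ((n-m:ℕ):ℝ) - 1 := by
    have h1nm : 1 ≤ n - m := by omega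
    rw [Nat.cast_sub h1nm]; norm_num
  have hlin : ((m:ℝ)-1)*(t/(θ*(m:ℝ))) + (((n-m:ℕ):ℝ)-1)*((-t)/(θ*((n-m:ℕ):ℝ)))
      = -(t/(θ*(m:ℝ))) - ((-t)/(θ*((n-m:ℕ):ℝ))) := by
    field_simp
    ring
  have hA0 : (0:ℝ) ≤ (m:ℝ)-1 := by linarith
  have hB0 : (0:ℝ) ≤ ((n-m:ℕ):ℝ)-1 := by
    rw [hK]; linarith
  have hA2 : ((m:ℝ)-1)*(2*(t/(θ*(m:ℝ)))^2) ≤ 800 := by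
    have h := quad_bound θ (m:ℝ) t 100 hθ1 (by linarith) (by norm_num) ht2
    linarith
  have hB2 : (((n-m:ℕ):ℝ)-1)*(2*((-t)/(θ*((n-m:ℕ):ℝ)))^2) ≤ 400 := by
    have hK1 : (1:ℝ) ≤ ((n-m:ℕ):ℝ) := by rw [hK]; linarith
    have ht2' : (-t)^2 ≤ 50*(θ*((n-m:ℕ):ℝ)) := by nlinarith [ht2, hθK2]
    have h := quad_bound θ ((n-m:ℕ):ℝ) (-t) 50 hθ1 hK1 (by norm_num) ht2'
    linarith
  have hE : |((m-1:ℕ):ℝ) * Real.log (1 + t/(θ*m)) + ((n-m-1:ℕ):ℝ) * Real.log (1 + (-t)/(θ*((n-m:ℕ):ℝ)))| ≤ 1300 := by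
    rw [hcastA, hcastB]
    have hdecomp : ((m:ℝ)-1) * Real.log (1 + t/(θ*m)) + (((n-m:ℕ):ℝ)-1) * Real.log (1 + (-t)/(θ*((n-m:ℕ):ℝ)))
        = ((m:ℝ)-1) * (Real.log (1 + t/(θ*m)) - t/(θ*m))
          + (((n-m:ℕ):ℝ)-1) * (Real.log (1 + (-t)/(θ*((n-m:ℕ):ℝ))) - (-t)/(θ*((n-m:ℕ):ℝ)))
          + (-(t/(θ*(m:ℝ))) - ((-t)/(θ*((n-m:ℕ):ℝ)))) := by
      rw [← hlin]; ring
    rw [hdecomp]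
    have e1 : |((m:ℝ)-1) * (Real.log (1 + t/(θ*m)) - t/(θ*m))| ≤ 800 := by
      rw [abs_mul, abs_of_nonneg hA0]
      calc ((m:ℝ)-1) * |Real.log (1 + t/(θ*m)) - t/(θ*m)|
          ≤ ((m:ℝ)-1) * (2*(t/(θ*m))^2) := mul_le_mul_of_nonneg_left hla hA0
        _ ≤ 800 := hA2
    have e2 : |(((n-m:ℕ):ℝ)-1) * (Real.log (1 + (-t)/(θ*((n-m:ℕ):ℝ))) - (-t)/(θ*((n-m:ℕ):ℝ)))| ≤ 400 := by
      rw [abs_mul, abs_of_nonneg hB0]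
      calc (((n-m:ℕ):ℝ)-1) * |Real.log (1 + (-t)/(θ*((n-m:ℕ):ℝ))) - (-t)/(θ*((n-m:ℕ):ℝ))|
          ≤ (((n-m:ℕ):ℝ)-1) * (2*((-t)/(θ*((n-m:ℕ):ℝ)))^2) := mul_le_mul_of_nonneg_left hlb hB0
        _ ≤ 400 := hB2
    have e3 : |(-(t/(θ*(m:ℝ))) - ((-t)/(θ*((n-m:ℕ):ℝ))))| ≤ 1 := by
      have h := abs_sub (-(t/(θ*(m:ℝ)))) ((-t)/(θ*((n-m:ℕ):ℝ)))
      rw [abs_neg] at h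
      linarith [hs12, hx12, h]
    refine le_trans (abs_add_three _ _ _) ?_
    linarith [e1, e2, e3]
  have hQpos : (0:ℝ) < (1 + t/(θ*m))^(m-1) * (1 + (-t)/(θ*((n-m:ℕ):ℝ)))^(n-m-1) :=
    mul_pos (pow_pos hspos _) (pow_pos hxpos _)
  have hlogQ : Real.log ((1 + t/(θ*m))^(m-1) * (1 + (-t)/(θ*((n-m:ℕ):ℝ)))^(n-m-1))
      = ((m-1:ℕ):ℝ) * Real.log (1 + t/(θ*m)) + ((n-m-1:ℕ):ℝ) * Real.log (1 + (-t)/(θ*((n-m:ℕ):ℝ))) := by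
    rw [Real.log_mul (by positivity) (by positivity), Real.log_pow, Real.log_pow]
  obtain ⟨hE1, hE2⟩ := abs_le.mp hE
  constructor
  · rw [← Real.exp_log hQpos]
    apply Real.exp_le_exp.mpr
    rw [hlogQ]; linarith
  · rw [← Real.exp_log hQpos]
    apply Real.exp_le_exp.mpr
    rw [hlogQ]; linarith

set_option maxHeartbeats 1000000 in
theorem conditional_density_bounds :
    ∃ c C : ℝ, 0 < c ∧ 0 < C ∧
      ∀ θ : ℝ, 1 / 4 ≤ θ → θ ≤ 4 →
      ∀ m n : ℕ, 0 < m → 0 < n → 400 ≤ θ * m → (m : ℝ) ≤ (n : ℝ) / 3 →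
      ∀ z : ℝ, 0 < z → z < θ * n →
        1 ≤ |z - θ * m| → |z - θ * m| ≤ 10 * Real.sqrt (θ * m) →
        c / Real.sqrt (θ * m) ≤
            gammaDensity θ m z * gammaDensity θ (n - m) (θ * n - z) /
              gammaDensity θ n (θ * n) ∧
          gammaDensity θ m z * gammaDensity θ (n - m) (θ * n - z) /
              gammaDensity θ n (θ * n) ≤
            C / Real.sqrt (θ * m) := by
  refine ⟨Real.exp (-1300)/18, 8*Real.exp 1300, by positivity, by positivity, ?_⟩
  intro θ hθ1 hθ4 m n hm hn hθm hmn z hz hzn ht1 ht10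
  clear ht1
  have hθ0 : (0:ℝ) < θ := by linarith
  have hm1 : 1 ≤ m := hm
  have hmR : (0:ℝ) < m := by exact_mod_cast hm
  have hnR : (0:ℝ) < n := by exact_mod_cast hn
  have hm100 : (100:ℝ) ≤ m := by nlinarith
  have h3m : 3*(m:ℝ) ≤ n := by linarith
  have hmnN : m < n := by exact_mod_cast (show (m:ℝ) < n by linarith)
  have h3mN : 3*m ≤ n := by exact_mod_cast (show ((3*m:ℕ):ℝ) ≤ n by push_cast; linarith)
  have hk2m : 2*m ≤ n - m := by omega
  have hK : ((n-m:ℕ):ℝ) = (n:ℝ) - m := by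
    exact_mod_cast Nat.cast_sub hmnN.le
  rw [density_ratio_eq θ hθ0 m n hm1 hmnN z]
  have hB := B_bounds θ hθ1 hθ4 m (n-m) hm1 hk2m
  rw [show m + (n-m) = n from by omega] at hB
  rw [show (m:ℝ) + ((n-m:ℕ):ℝ) = (n:ℝ) from by rw [hK]; ring] at hB
  have hQ := Q_bounds θ hθ1 hθ4 m n hm hθm hmn z hz hzn ht10
  obtain ⟨hBl, hBu⟩ := hB
  obtain ⟨hQl, hQu⟩ := hQ
  have hQpos : (0:ℝ) < (z/(θ*(m:ℝ)))^(m-1) * ((θ*(n:ℝ) - z)/(θ*((n-m:ℕ):ℝ)))^(n-m-1) :=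
    lt_of_lt_of_le (Real.exp_pos _) hQl
  have hBpos : (0:ℝ) ≤ (n.choose m : ℝ) * (m:ℝ)^m * ((n-m:ℕ):ℝ)^(n-m) / (θ * (n:ℝ)^n) :=
    le_trans (by positivity) hBl
  constructor
  · calc Real.exp (-1300)/18 / Real.sqrt (θ*m)
        = (1/18 / Real.sqrt (θ*m)) * Real.exp (-1300) := by ring
      _ ≤ ((n.choose m : ℝ) * (m:ℝ)^m * ((n-m:ℕ):ℝ)^(n-m) / (θ * (n:ℝ)^n))
            * ((z/(θ*(m:ℝ)))^(m-1) * ((θ*(n:ℝ) - z)/(θ*((n-m:ℕ):ℝ)))^(n-m-1)) :=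
          mul_le_mul hBl hQl (Real.exp_pos _).le hBpos
  · calc ((n.choose m : ℝ) * (m:ℝ)^m * ((n-m:ℕ):ℝ)^(n-m) / (θ * (n:ℝ)^n))
            * ((z/(θ*(m:ℝ)))^(m-1) * ((θ*(n:ℝ) - z)/(θ*((n-m:ℕ):ℝ)))^(n-m-1))
        ≤ (8 / Real.sqrt (θ*m)) * Real.exp 1300 :=
          mul_le_mul hBu hQu hQpos.le (by positivity)
      _ = 8*Real.exp 1300 / Real.sqrt (θ*m) := by ring

end Paper
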